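/- Let N > m > 1, m* = Nm/(N−m), λ > m/(N−m), and s₀ ≥ e². Let f : ℝ → ℝ be continuous with f(s) = s^(m*−1)/(log s)^λ for all s ≥ s₀. Then lim_{s→+∞} Q(s)·(s^(m−1)/f(s))^(N/m) = ∞. -/

import Mathlib

open Set Filter MeasureTheory

section AuxLCE

noncomputable def phim (m x : ℝ) : ℝ := |x| ^ (m - 2) * x

noncomputable def Fint (f : ℝ → ℝ) (s : ℝ) : ℝ := ∫ t in (0:ℝ)..s, f t

noncomputable def Qfun (N m : ℝ) (f : ℝ → ℝ) (s : ℝ) : ℝ :=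
  m * N * Fint f s - (N - m) * s * f s

/-- `u` (with derivative function `u'`) is a solution of the radial quasilinear
equation on the set `J`. -/
def IsSolutionOn (N m : ℝ) (f : ℝ → ℝ) (J : Set ℝ) (u u' : ℝ → ℝ) : Prop :=
  (∀ r ∈ J, HasDerivWithinAt u (u' r) J r) ∧ ContinuousOn u' J ∧
    ∃ w' : ℝ → ℝ,
      (∀ r ∈ J ∩ Set.Ioi (0:ℝ),
        HasDerivWithinAt (fun t => phim m (u' t)) (w' r) (J ∩ Set.Ioi (0:ℝ)) r) ∧
      ContinuousOn w' (J ∩ Set.Ioi (0:ℝ)) ∧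
      ∀ r ∈ J ∩ Set.Ioi (0:ℝ), w' r + ((N - 1) / r) * phim m (u' r) + f (u r) = 0

def IsIVPSolutionOn (N m : ℝ) (f : ℝ → ℝ) (α : ℝ) (J : Set ℝ) (u u' : ℝ → ℝ) : Prop :=
  IsSolutionOn N m f J u u' ∧ u 0 = α ∧ u' 0 = 0

/-- Admissible domains for the IVP: `[0,∞)` or `[0,R)` with `0 < R`. -/
def IVPDomain (J : Set ℝ) : Prop :=
  J = Set.Ici (0:ℝ) ∨ ∃ R : ℝ, 0 < R ∧ J = Set.Ico (0:ℝ) R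

/-- The solution `u` of the IVP on `J` cannot be extended to a solution on a
strictly larger admissible domain. -/
def Noncontinuable (N m : ℝ) (f : ℝ → ℝ) (α : ℝ) (J : Set ℝ) (u u' : ℝ → ℝ) : Prop :=
  ∀ J' : Set ℝ, IVPDomain J' → J ⊂ J' →
    ¬ ∃ v v' : ℝ → ℝ, IsIVPSolutionOn N m f α J' v v' ∧ Set.EqOn v u J ∧ Set.EqOn v' u' J

open Classical in
/-- The filter describing the approach to the right endpoint of an IVP domain. -/
noncomputable def domEnd (J : Set ℝ) : Filter ℝ :=
  if J = Set.Ici (0:ℝ) then Filter.atTop else nhdsWithin (sSup J) (Set.Iio (sSup J))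

def LocLipschitzOn (f : ℝ → ℝ) (S : Set ℝ) : Prop :=
  ∀ x ∈ S, ∃ ε : ℝ, 0 < ε ∧ ∃ K : NNReal, LipschitzOnWith K f (Metric.ball x ε ∩ S)

/-- Assumption (f₂). -/
structure Hf2 (f : ℝ → ℝ) (βm βp : ℝ) (γm γp : EReal) : Prop where
  hβm : βm < 0
  hβp : 0 < βp
  hFneg : ∀ s : ℝ, s ∈ Set.Ioo βm βp → s ≠ 0 → Fint f s < 0
  hFβm : Fint f βm = 0
  hFβp : Fint f βp = 0
  hγp : (βp : EReal) < γp
  hγm : γm < (βm : EReal)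
  hfpos : ∀ s : ℝ, βp < s → (s : EReal) < γp → 0 < f s
  hfneg : ∀ s : ℝ, γm < (s : EReal) → s < βm → f s < 0
  hγpzero : ∀ s : ℝ, (s : EReal) = γp → f s = 0
  hγmzero : ∀ s : ℝ, (s : EReal) = γm → f s = 0
  hlim : ∃ L : EReal,
    Filter.Tendsto (fun s : ℝ => (Fint f s : EReal))
      (Filter.comap Real.toEReal (nhdsWithin γp (Set.Iio γp))) (nhds L) ∧
    Filter.Tendsto (fun s : ℝ => (Fint f s : EReal))
      (Filter.comap Real.toEReal (nhdsWithin γm (Set.Ioi γm))) (nhds L)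
  hlip : LocLipschitzOn f {s : ℝ | (γm < (s : EReal) ∧ s < 0) ∨ (0 < s ∧ (s : EReal) < γp)}

/-- Assumption (f₃). -/
def Hf3 (N m : ℝ) (f : ℝ → ℝ) (βm βp : ℝ) (γm γp : EReal) : Prop :=
  (γp = ⊤ →
    (∃ βb : ℝ, βp < βb ∧ ∀ s : ℝ, βb ≤ s → 0 ≤ Qfun N m f s) ∧
    (∃ θ : ℝ, θ ∈ Set.Ioo (0:ℝ) 1 ∧
      Filter.Tendsto (fun s : ℝ =>
        sInf ((fun p : ℝ × ℝ =>
          Qfun N m f p.2 * ((|s| ^ (m - 2) * s) / f p.1) ^ (N / m)) ''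
            (Set.Icc (θ * s) s ×ˢ Set.Icc (θ * s) s)))
        Filter.atTop Filter.atTop)) ∧
  (γm = ⊥ →
    (∃ βb : ℝ, -βb < βm ∧ ∀ s : ℝ, s ≤ -βb → 0 ≤ Qfun N m f s) ∧
    (∃ θ : ℝ, θ ∈ Set.Ioo (0:ℝ) 1 ∧
      Filter.Tendsto (fun s : ℝ =>
        sInf ((fun p : ℝ × ℝ =>
          Qfun N m f p.2 * ((|s| ^ (m - 2) * s) / f p.1) ^ (N / m)) ''
            (Set.Icc s (θ * s) ×ˢ Set.Icc s (θ * s))))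
        Filter.atBot Filter.atTop))

/-- Assumption (f₄). -/
def Hf4 (N m : ℝ) (f : ℝ → ℝ) (βm βp : ℝ) (γm γp : EReal) : Prop :=
  (γp ≠ ⊤ → ∃ L₀ : ℝ, 0 < L₀ ∧ ∃ βb : ℝ, βp < βb ∧
    ∀ s : ℝ, βb ≤ s → (s : EReal) < γp → f s ≤ L₀ * (γp.toReal - s) ^ (m - 1)) ∧
  (γm ≠ ⊥ → ∃ L₀ : ℝ, 0 < L₀ ∧ ∃ βb : ℝ, -βm < βb ∧
    ∀ s : ℝ, γm < (s : EReal) → s ≤ -βb → -f s ≤ L₀ * (s - γm.toReal) ^ (m - 1))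

end AuxLCE

section AuxLCE2

lemma aux_hasDerivAt (c lam : ℝ) {x : ℝ} (hx : 1 < x) :
    HasDerivAt (fun t => t ^ c / Real.log t ^ lam)
      (c * (x ^ (c - 1) / Real.log x ^ lam) - lam * (x ^ (c - 1) / Real.log x ^ (lam + 1))) x := by
  have hx0 : 0 < x := lt_trans one_pos hx
  have hlog : 0 < Real.log x := Real.log_pos hx
  have h1 : HasDerivAt (fun t : ℝ => t ^ c) (c * x ^ (c - 1)) x :=
    Real.hasDerivAt_rpow_const (Or.inl hx0.ne')
  have h2 : HasDerivAt (fun t : ℝ => Real.log t ^ (-lam))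
      (-lam * Real.log x ^ (-lam - 1) * x⁻¹) x := by
    have := (Real.hasDerivAt_rpow_const (p := -lam) (Or.inl hlog.ne')).comp x
      (Real.hasDerivAt_log hx0.ne')
    exact this
  have h3 := h1.mul h2
  have heq : (fun t : ℝ => t ^ c / Real.log t ^ lam)
      =ᶠ[nhds x] fun t => t ^ c * Real.log t ^ (-lam) := by
    filter_upwards [eventually_gt_nhds hx] with t ht
    rw [Real.rpow_neg (Real.log_pos ht).le, div_eq_mul_inv]
  refine HasDerivAt.congr_of_eventuallyEq ?_ heq
  refine h3.congr_deriv ?_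
  have e1 : x ^ c * x⁻¹ = x ^ (c - 1) := by
    rw [Real.rpow_sub hx0, Real.rpow_one, div_eq_mul_inv]
  have e2 : Real.log x ^ (-lam) = (Real.log x ^ lam)⁻¹ := by
    rw [Real.rpow_neg hlog.le]
  have e3 : Real.log x ^ (-lam - 1) = (Real.log x ^ (lam + 1))⁻¹ := by
    rw [show -lam - 1 = -(lam + 1) by ring, Real.rpow_neg hlog.le]
  rw [e2, e3]
  have e4 : x ^ c * (-lam * (Real.log x ^ (lam + 1))⁻¹ * x⁻¹)
      = -(lam * (x ^ (c - 1) / Real.log x ^ (lam + 1))) := by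
    rw [div_eq_mul_inv, ← e1]; ring
  rw [e4, div_eq_mul_inv]
  ring

lemma aux_contOn (p q : ℝ) :
    ContinuousOn (fun t : ℝ => t ^ p / Real.log t ^ q) (Set.Ioi 1) := by
  apply ContinuousOn.div
  · intro x hx
    have hx0 : (0:ℝ) < x := lt_trans one_pos hx
    exact (Real.continuousAt_rpow_const x p (Or.inl hx0.ne')).continuousWithinAt
  · intro x hx
    have hx1 : (1:ℝ) < x := hx
    have : ContinuousAt (fun t : ℝ => Real.log t ^ q) x := by
      have hl : ContinuousAt Real.log x := Real.continuousAt_log (lt_trans one_pos hx1).ne'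
      exact (Real.continuousAt_rpow_const _ q (Or.inl (Real.log_pos hx1).ne')).comp hl
    exact this.continuousWithinAt
  · intro x hx
    exact (Real.rpow_pos_of_pos (Real.log_pos hx) q).ne'

lemma aux_intInt (p q a b : ℝ) (ha : 1 < a) (hab : a ≤ b) :
    IntervalIntegrable (fun t : ℝ => t ^ p / Real.log t ^ q) volume a b := by
  apply ((aux_contOn p q).mono ?_).intervalIntegrable
  rw [Set.uIcc_of_le hab]
  exact fun t ht => lt_of_lt_of_le ha ht.1

lemma aux_Q_eq (N m lam s₀ : ℝ) (hm : 1 < m) (hNm : m < N) (hs₀ : 1 < s₀)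
    (f : ℝ → ℝ) (hf : Continuous f)
    (hfs : ∀ s : ℝ, s₀ ≤ s → f s = s ^ (N * m / (N - m) - 1) / (Real.log s) ^ lam)
    {s : ℝ} (hs : s₀ ≤ s) :
    Qfun N m f s = Qfun N m f s₀ + ((N - m) * lam) *
      ∫ t in s₀..s, t ^ (N * m / (N - m) - 1) / Real.log t ^ (lam + 1) := by
  set c : ℝ := N * m / (N - m) with hc_def
  have hNm0 : (0:ℝ) < N - m := by linarith
  have hm0 : (0:ℝ) < m := by linarith
  have hN0 : (0:ℝ) < N := by linarith
  have hc : 0 < c := by positivity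
  have hcNm : c * (N - m) = m * N := by
    rw [hc_def, div_mul_cancel₀ _ hNm0.ne']; ring
  have hs0pos : (0:ℝ) < s := by linarith
  have hs₀pos : (0:ℝ) < s₀ := by linarith
  -- integrability
  have hIA : IntervalIntegrable (fun t : ℝ => t ^ (c - 1) / Real.log t ^ lam) volume s₀ s :=
    aux_intInt _ _ _ _ hs₀ hs
  have hIB : IntervalIntegrable (fun t : ℝ => t ^ (c - 1) / Real.log t ^ (lam + 1)) volume s₀ s :=
    aux_intInt _ _ _ _ hs₀ hs
  -- FTC
  have hftc : ∫ t in s₀..s,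
      (c * (t ^ (c - 1) / Real.log t ^ lam) - lam * (t ^ (c - 1) / Real.log t ^ (lam + 1)))
      = s ^ c / Real.log s ^ lam - s₀ ^ c / Real.log s₀ ^ lam := by
    apply intervalIntegral.integral_eq_sub_of_hasDerivAt
    · intro t ht
      rw [Set.uIcc_of_le hs] at ht
      exact aux_hasDerivAt c lam (lt_of_lt_of_le hs₀ ht.1)
    · exact (hIA.const_mul c).sub (hIB.const_mul lam)
  have hsplit : (∫ t in s₀..s,
      (c * (t ^ (c - 1) / Real.log t ^ lam) - lam * (t ^ (c - 1) / Real.log t ^ (lam + 1))))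
      = c * (∫ t in s₀..s, t ^ (c - 1) / Real.log t ^ lam)
        - lam * ∫ t in s₀..s, t ^ (c - 1) / Real.log t ^ (lam + 1) := by
    rw [intervalIntegral.integral_sub (hIA.const_mul c) (hIB.const_mul lam),
      intervalIntegral.integral_const_mul, intervalIntegral.integral_const_mul]
  -- Fint difference
  have hFint : Fint f s = Fint f s₀ + ∫ t in s₀..s, f t := by
    unfold Fint
    rw [← intervalIntegral.integral_add_adjacent_intervals
      (hf.intervalIntegrable 0 s₀) (hf.intervalIntegrable s₀ s)]
  have hfA : (∫ t in s₀..s, f t) = ∫ t in s₀..s, t ^ (c - 1) / Real.log t ^ lam := by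
    apply intervalIntegral.integral_congr
    intro t ht
    rw [Set.uIcc_of_le hs] at ht
    exact hfs t ht.1
  have hIAval : c * (∫ t in s₀..s, t ^ (c - 1) / Real.log t ^ lam)
      = (s ^ c / Real.log s ^ lam - s₀ ^ c / Real.log s₀ ^ lam)
        + lam * ∫ t in s₀..s, t ^ (c - 1) / Real.log t ^ (lam + 1) := by
    rw [← hftc, hsplit]; ring
  have h1c : (1:ℝ) + (c - 1) = c := by ring
  have h1c' : (1:ℝ) + (c - 1) ≠ 0 := by rw [h1c]; exact hc.ne'
  have hsc : s * (s ^ (c - 1) / Real.log s ^ lam) = s ^ c / Real.log s ^ lam := by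
    rw [← mul_div_assoc, ← Real.rpow_one_add' hs0pos.le h1c', h1c]
  have hsc₀ : s₀ * (s₀ ^ (c - 1) / Real.log s₀ ^ lam) = s₀ ^ c / Real.log s₀ ^ lam := by
    rw [← mul_div_assoc, ← Real.rpow_one_add' hs₀pos.le h1c', h1c]
  unfold Qfun
  rw [hFint, hfA, hfs s hs, hfs s₀ le_rfl, mul_assoc ((N-m)) s, mul_assoc ((N-m)) s₀,
    hsc, hsc₀]
  have key : m * N * (∫ t in s₀..s, t ^ (c - 1) / Real.log t ^ lam)
      = (N - m) * ((s ^ c / Real.log s ^ lam - s₀ ^ c / Real.log s₀ ^ lam)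
        + lam * ∫ t in s₀..s, t ^ (c - 1) / Real.log t ^ (lam + 1)) := by
    rw [← hIAval, ← hcNm]; ring
  linear_combination key

end AuxLCE2

/-- the critical nonlinearity with logarithmic correction
satisfies the key limit in (f₃). -/
theorem log_critical_example_limit
    (N m : ℝ) (hm : 1 < m) (hNm : m < N) (lam s₀ : ℝ)
    (hlam : m / (N - m) < lam) (hs₀ : Real.exp 2 ≤ s₀)
    (f : ℝ → ℝ) (hf : Continuous f)
    (hfs : ∀ s : ℝ, s₀ ≤ s → f s = s ^ (N * m / (N - m) - 1) / (Real.log s) ^ lam) :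
    Filter.Tendsto (fun s : ℝ => Qfun N m f s * (s ^ (m - 1) / f s) ^ (N / m))
      Filter.atTop Filter.atTop := by
  set c : ℝ := N * m / (N - m) with hc_def
  have hNm0 : (0:ℝ) < N - m := by linarith
  have hm0 : (0:ℝ) < m := by linarith
  have hN0 : (0:ℝ) < N := by linarith
  have hc : 0 < c := by positivity
  have hlam0 : 0 < lam := lt_trans (by positivity) hlam
  have he1 : (1:ℝ) < Real.exp 2 := by
    calc (1:ℝ) = Real.exp 0 := Real.exp_zero.symm
    _ < Real.exp 2 := Real.exp_lt_exp.mpr (by norm_num)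
  have hs₀1 : 1 < s₀ := lt_of_lt_of_le he1 hs₀
  have hs₀pos : (0:ℝ) < s₀ := lt_trans one_pos hs₀1
  have hlogs₀ : 2 ≤ Real.log s₀ := by
    calc (2:ℝ) = Real.log (Real.exp 2) := (Real.log_exp 2).symm
    _ ≤ Real.log s₀ := Real.log_le_log (Real.exp_pos 2) hs₀
  set aN : ℝ := lam * (N / m) with haN_def
  set ε : ℝ := aN - (lam + 1) with hε_def
  have hε : 0 < ε := by
    rw [div_lt_iff₀ hNm0] at hlam
    have h1 : ε = (lam * (N - m) - m) / m := by
      rw [hε_def, haN_def]; field_simp; ring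
    rw [h1]
    apply div_pos (by linarith) hm0
  set K : ℝ := (N - m) * lam / (2 * c) with hK_def
  have hK : 0 < K := by positivity
  set Q₀ : ℝ := Qfun N m f s₀ with hQ₀_def
  have hmono : ∀ᶠ s in atTop,
      Q₀ * (Real.log s ^ aN / s ^ c) + K * Real.log s ^ ε
        ≤ Qfun N m f s * (s ^ (m - 1) / f s) ^ (N / m) := by
    have h2 : ∀ᶠ s : ℝ in atTop, (2:ℝ) ≤ s ^ (c / 2) :=
      (tendsto_rpow_atTop (by positivity)).eventually_ge_atTop 2
    filter_upwards [eventually_ge_atTop (s₀ ^ (2:ℝ)), h2, eventually_ge_atTop s₀]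
      with s hs2 hsc2 hss₀
    have hs1 : (1:ℝ) < s := lt_of_lt_of_le hs₀1 hss₀
    have hs0 : (0:ℝ) < s := lt_trans one_pos hs1
    have hL2 : 2 ≤ Real.log s := le_trans hlogs₀ (Real.log_le_log hs₀pos hss₀)
    have hL : 0 < Real.log s := by linarith
    set u : ℝ := s ^ ((2:ℝ)⁻¹) with hu_def
    have hu_ge : s₀ ≤ u := by
      have h := Real.rpow_le_rpow (by positivity) hs2 (by norm_num : (0:ℝ) ≤ (2:ℝ)⁻¹)
      rwa [← Real.rpow_mul hs₀pos.le, show (2:ℝ) * (2:ℝ)⁻¹ = 1 by norm_num,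
        Real.rpow_one] at h
    have hu1 : 1 < u := lt_of_lt_of_le hs₀1 hu_ge
    have hu0 : (0:ℝ) < u := lt_trans one_pos hu1
    have hu_le : u ≤ s := by
      have h := Real.rpow_le_rpow_of_exponent_le hs1.le (by norm_num : (2:ℝ)⁻¹ ≤ 1)
      rwa [Real.rpow_one] at h
    set Ib : ℝ := ∫ t in s₀..s, t ^ (c - 1) / Real.log t ^ (lam + 1) with hIb_def
    have hIb_split : Ib = (∫ t in s₀..u, t ^ (c - 1) / Real.log t ^ (lam + 1))
        + ∫ t in u..s, t ^ (c - 1) / Real.log t ^ (lam + 1) :=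
      (intervalIntegral.integral_add_adjacent_intervals
        (aux_intInt _ _ _ _ hs₀1 hu_ge) (aux_intInt _ _ _ _ hu1 hu_le)).symm
    have h1nonneg : 0 ≤ ∫ t in s₀..u, t ^ (c - 1) / Real.log t ^ (lam + 1) := by
      apply intervalIntegral.integral_nonneg hu_ge
      intro t ht
      have ht1 : (1:ℝ) ≤ t := le_trans hs₀1.le ht.1
      have ht0 : (0:ℝ) < t := lt_of_lt_of_le one_pos ht1
      exact div_nonneg (Real.rpow_nonneg ht0.le _)
        (Real.rpow_nonneg (Real.log_nonneg ht1) _)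
    have hint1 : IntervalIntegrable (fun t : ℝ => t ^ (c - 1) / Real.log s ^ (lam + 1))
        volume u s :=
      (intervalIntegral.intervalIntegrable_rpow' (by linarith : (-1:ℝ) < c - 1)).div_const _
    have hcmp : (∫ t in u..s, t ^ (c - 1) / Real.log s ^ (lam + 1))
        ≤ ∫ t in u..s, t ^ (c - 1) / Real.log t ^ (lam + 1) := by
      apply intervalIntegral.integral_mono_on hu_le hint1 (aux_intInt _ _ _ _ hu1 hu_le)
      intro t ht
      have ht1 : (1:ℝ) < t := lt_of_lt_of_le hu1 ht.1
      have hlt : (0:ℝ) < Real.log t := Real.log_pos ht1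
      have hle : Real.log t ^ (lam + 1) ≤ Real.log s ^ (lam + 1) :=
        Real.rpow_le_rpow hlt.le (Real.log_le_log (by linarith) ht.2) (by linarith)
      exact div_le_div_of_nonneg_left (Real.rpow_nonneg (by linarith) _)
        (Real.rpow_pos_of_pos hlt _) hle
    have hval : (∫ t in u..s, t ^ (c - 1)) = (s ^ c - u ^ c) / c := by
      rw [integral_rpow (Or.inl (by linarith : (-1:ℝ) < c - 1))]
      norm_num
    have hdiv : (∫ t in u..s, t ^ (c - 1) / Real.log s ^ (lam + 1))
        = ((s ^ c - u ^ c) / c) / Real.log s ^ (lam + 1) := by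
      rw [intervalIntegral.integral_div, hval]
    have huc : u ^ c = s ^ (c / 2) := by
      rw [hu_def, ← Real.rpow_mul hs0.le]
      congr 1
      ring
    have hschalf : s ^ (c / 2) ≤ s ^ c / 2 := by
      have hmul : s ^ (c / 2) * s ^ (c / 2) = s ^ c := by
        rw [← Real.rpow_add hs0]; congr 1; ring
      nlinarith [hsc2]
    have hIb_low : s ^ c / (2 * c) / Real.log s ^ (lam + 1) ≤ Ib := by
      have h1 : s ^ c / (2 * c) ≤ (s ^ c - u ^ c) / c := by
        have harr : s ^ c / (2 * c) = (s ^ c / 2) / c := by rw [div_div]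
        rw [harr, huc]
        apply div_le_div_of_nonneg_right ?_ hc.le
        linarith [hschalf]
      calc s ^ c / (2 * c) / Real.log s ^ (lam + 1)
          ≤ ((s ^ c - u ^ c) / c) / Real.log s ^ (lam + 1) := by
            apply div_le_div_of_nonneg_right h1 (Real.rpow_pos_of_pos hL _).le
        _ = ∫ t in u..s, t ^ (c - 1) / Real.log s ^ (lam + 1) := hdiv.symm
        _ ≤ ∫ t in u..s, t ^ (c - 1) / Real.log t ^ (lam + 1) := hcmp
        _ ≤ Ib := by rw [hIb_split]; linarith [h1nonneg]
    have hQ := aux_Q_eq N m lam s₀ hm hNm hs₀1 f hf hfs hss₀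
    rw [← hIb_def, ← hQ₀_def] at hQ
    have hfs' : f s = s ^ (c - 1) / Real.log s ^ lam := hfs s hss₀
    have hX : (s ^ (m - 1) / f s) ^ (N / m) = Real.log s ^ aN / s ^ c := by
      rw [hfs']
      have h1 : s ^ (m - 1) / (s ^ (c - 1) / Real.log s ^ lam)
          = s ^ (m - c) * Real.log s ^ lam := by
        rw [div_div_eq_mul_div, mul_comm, mul_div_assoc, ← Real.rpow_sub hs0,
          show m - 1 - (c - 1) = m - c by ring, mul_comm]
      rw [h1, Real.mul_rpow (Real.rpow_nonneg hs0.le _) (Real.rpow_nonneg hL.le _),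
        ← Real.rpow_mul hs0.le, ← Real.rpow_mul hL.le,
        show (m - c) * (N / m) = -c by rw [hc_def]; field_simp; ring,
        show lam * (N / m) = aN from haN_def.symm,
        Real.rpow_neg hs0.le, div_eq_mul_inv]
      ring
    rw [hQ, hX]
    have hXnn : 0 ≤ Real.log s ^ aN / s ^ c :=
      div_nonneg (Real.rpow_nonneg hL.le _) (Real.rpow_nonneg hs0.le _)
    have hterm : K * Real.log s ^ ε
        = ((N - m) * lam) * (s ^ c / (2 * c) / Real.log s ^ (lam + 1))
          * (Real.log s ^ aN / s ^ c) := by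
      have hLsplit : Real.log s ^ aN = Real.log s ^ ε * Real.log s ^ (lam + 1) := by
        rw [← Real.rpow_add hL]; congr 1; rw [hε_def]; ring
      rw [hLsplit, hK_def]
      have hLne : Real.log s ^ (lam + 1) ≠ 0 := (Real.rpow_pos_of_pos hL _).ne'
      have hsne : s ^ c ≠ 0 := (Real.rpow_pos_of_pos hs0 _).ne'
      field_simp
    have hκ : (0:ℝ) ≤ (N - m) * lam := by positivity
    have hmul : ((N - m) * lam) * (s ^ c / (2 * c) / Real.log s ^ (lam + 1))
          * (Real.log s ^ aN / s ^ c)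
        ≤ ((N - m) * lam) * Ib * (Real.log s ^ aN / s ^ c) :=
      mul_le_mul_of_nonneg_right (mul_le_mul_of_nonneg_left hIb_low hκ) hXnn
    calc Q₀ * (Real.log s ^ aN / s ^ c) + K * Real.log s ^ ε
        = Q₀ * (Real.log s ^ aN / s ^ c)
          + ((N - m) * lam) * (s ^ c / (2 * c) / Real.log s ^ (lam + 1))
            * (Real.log s ^ aN / s ^ c) := by rw [hterm]
      _ ≤ Q₀ * (Real.log s ^ aN / s ^ c)
          + ((N - m) * lam) * Ib * (Real.log s ^ aN / s ^ c) := by linarith [hmul]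
      _ = (Q₀ + (N - m) * lam * Ib) * (Real.log s ^ aN / s ^ c) := by ring
  refine tendsto_atTop_mono' atTop hmono ?_
  have t1 : Tendsto (fun s : ℝ => Real.log s ^ aN / s ^ c) atTop (nhds 0) :=
    (isLittleO_log_rpow_rpow_atTop aN hc).tendsto_div_nhds_zero
  have t2 : Tendsto (fun s : ℝ => K * Real.log s ^ ε) atTop atTop :=
    ((tendsto_rpow_atTop hε).comp Real.tendsto_log_atTop).const_mul_atTop hK
  exact Filter.Tendsto.add_atTop (t1.const_mul Q₀) t2
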